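/- arXiv:1402.1450 — 2 statements merged into one kernel-verified Lean document; each statement's English description precedes it below -/
import Mathlib

section
/- Let D ⊆ ℝ^p be compact and let f : D → ℝ be continuous. For every ε > 0 there exists a finite linear combination ψ(x) = Σ_{i=1}^n c_i exp(−‖x − z_i‖²/λ²) with centers z_i ∈ ℝ^p and real coefficients c_i such that sup_{x ∈ D} |f(x) − ψ(x)| ≤ ε. -/
/-- Universality of the squared-exponential kernel: on a compact `D ⊆ ℝ^p`, every continuous
function can be uniformly approximated by finite linear combinations of Gaussian bumps. -/
theorem gaussian_kernel_universal (p : ℕ) (D : Set (EuclideanSpace ℝ (Fin p)))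
    (hD : IsCompact D) (f : EuclideanSpace ℝ (Fin p) → ℝ) (hf : ContinuousOn f D)
    (lam : ℝ) (hlam : 0 < lam) (ε : ℝ) (hε : 0 < ε) :
    ∃ (n : ℕ) (c : Fin n → ℝ) (z : Fin n → EuclideanSpace ℝ (Fin p)),
      ∀ x ∈ D, |f x - ∑ i, c i * Real.exp (-‖x - z i‖ ^ 2 / lam ^ 2)| ≤ ε := by
  classical
  let E := EuclideanSpace ℝ (Fin p)
  haveI : CompactSpace D := isCompact_iff_compactSpace.mp hD
  -- exponential functions
  let G : E → C(D, ℝ) := fun w =>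
    ⟨fun x => Real.exp (inner ℝ (x : E) w),
      Real.continuous_exp.comp (continuous_subtype_val.inner continuous_const)⟩
  -- the exponentials form a submonoid
  let M : Submonoid C(D, ℝ) :=
    { carrier := Set.range G
      mul_mem' := by
        rintro _ _ ⟨w₁, rfl⟩ ⟨w₂, rfl⟩
        refine ⟨w₁ + w₂, ?_⟩
        ext x
        simp only [G, ContinuousMap.mul_apply, ContinuousMap.coe_mk, inner_add_right,
          Real.exp_add]
      one_mem' := by
        refine ⟨0, ?_⟩
        ext x
        simp only [G, ContinuousMap.coe_mk, ContinuousMap.one_apply, inner_zero_right,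
          Real.exp_zero] }
  -- the target modified function
  let h : C(D, ℝ) :=
    ⟨fun x => f x * Real.exp (‖(x : E)‖ ^ 2 / lam ^ 2),
      (hf.restrict).mul (Real.continuous_exp.comp
        ((continuous_subtype_val.norm.pow 2).div_const _))⟩
  let A : Subalgebra ℝ C(D, ℝ) := Algebra.adjoin ℝ (Set.range G)
  have hsep : A.SeparatesPoints := by
    intro x y hxy
    refine ⟨G ((x : E) - y), ⟨G ((x : E) - y),
      Algebra.subset_adjoin ⟨_, rfl⟩, rfl⟩, ?_⟩
    simp only [G, ContinuousMap.coe_mk]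
    intro hc
    have hinj := Real.exp_injective hc
    have hxy' : (x : E) ≠ y := fun hh => hxy (Subtype.ext hh)
    have hz : inner ℝ ((x : E) - y) ((x : E) - y) = (0 : ℝ) := by
      rw [inner_sub_left]; linarith
    exact hxy' (sub_eq_zero.mp (inner_self_eq_zero.mp hz))
  obtain ⟨g, hg⟩ := ContinuousMap.exists_mem_subalgebra_near_continuousMap_of_separatesPoints
    A hsep h ε hε
  -- the adjoin equals the span since range G is a submonoid
  have hspan : (g : C(D, ℝ)) ∈ Submodule.span ℝ (Set.range G) := by
    have h1 : (g : C(D, ℝ)) ∈ Subalgebra.toSubmodule A := g.2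
    rw [Algebra.adjoin_eq_span] at h1
    have h2 : Submonoid.closure (Set.range G) = M := Submonoid.closure_eq M
    rwa [h2] at h1
  obtain ⟨n, c, gv, hsum⟩ := Submodule.mem_span_set'.mp hspan
  -- choose centers
  choose w hw using fun i => (gv i).2
  refine ⟨n, fun i => c i * Real.exp (‖(lam ^ 2 / 2) • w i‖ ^ 2 / lam ^ 2),
    fun i => (lam ^ 2 / 2) • w i, fun x hx => ?_⟩
  set xD : D := ⟨x, hx⟩
  -- pointwise value of g
  have hgx : (g : C(D, ℝ)) xD = ∑ i, c i * Real.exp (inner ℝ x (w i)) := by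
    rw [← hsum]
    rw [ContinuousMap.sum_apply]
    refine Finset.sum_congr rfl fun i _ => ?_
    rw [ContinuousMap.smul_apply]
    rw [← hw i]
    simp only [G, ContinuousMap.coe_mk, smul_eq_mul]
    rfl
  -- rewrite each gaussian term
  have hterm : ∀ i, (c i * Real.exp (‖(lam ^ 2 / 2) • w i‖ ^ 2 / lam ^ 2)) *
      Real.exp (-‖x - (lam ^ 2 / 2) • w i‖ ^ 2 / lam ^ 2)
      = c i * Real.exp (inner ℝ x (w i)) * Real.exp (-(‖x‖ ^ 2) / lam ^ 2) := by
    intro i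
    set z := (lam ^ 2 / 2) • w i with hz
    have hnorm : ‖x - z‖ ^ 2 = ‖x‖ ^ 2 - 2 * inner ℝ x z + ‖z‖ ^ 2 :=
      norm_sub_sq_real x z
    have hiz : (inner ℝ x z : ℝ) = (lam ^ 2 / 2) * inner ℝ x (w i) := by
      rw [hz, real_inner_smul_right]
    have hlam2 : lam ^ 2 ≠ 0 := by positivity
    rw [mul_assoc, mul_assoc, ← Real.exp_add, ← Real.exp_add]
    congr 1
    rw [hnorm, hiz]
    field_simp
    ring
  have hsum2 : (∑ i, (c i * Real.exp (‖(lam ^ 2 / 2) • w i‖ ^ 2 / lam ^ 2)) *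
      Real.exp (-‖x - (lam ^ 2 / 2) • w i‖ ^ 2 / lam ^ 2))
      = (g : C(D, ℝ)) xD * Real.exp (-(‖x‖ ^ 2) / lam ^ 2) := by
    rw [hgx, Finset.sum_mul]
    exact Finset.sum_congr rfl fun i _ => hterm i
  have hfx : f x = h xD * Real.exp (-(‖x‖ ^ 2) / lam ^ 2) := by
    show f x = (f x * Real.exp (‖x‖ ^ 2 / lam ^ 2)) * Real.exp (-(‖x‖ ^ 2) / lam ^ 2)
    rw [mul_assoc, ← Real.exp_add]
    have : ‖x‖ ^ 2 / lam ^ 2 + -(‖x‖ ^ 2) / lam ^ 2 = 0 := by ring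
    rw [this, Real.exp_zero, mul_one]
  rw [hsum2, hfx]
  rw [← sub_mul, abs_mul]
  have hexple : |Real.exp (-(‖x‖ ^ 2) / lam ^ 2)| ≤ 1 := by
    rw [abs_of_pos (Real.exp_pos _)]
    apply Real.exp_le_one_iff.mpr
    apply div_nonpos_of_nonpos_of_nonneg
    · simp [sq_nonneg]
    · positivity
  have hdiff : |h xD - (g : C(D, ℝ)) xD| < ε := by
    have := ContinuousMap.norm_coe_le_norm ((g : C(D, ℝ)) - h) xD
    have h2 : ‖((g : C(D, ℝ)) - h) xD‖ < ε := lt_of_le_of_lt this hg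
    rw [ContinuousMap.sub_apply] at h2
    rw [abs_sub_comm]
    exact h2
  calc |h xD - (g : C(D, ℝ)) xD| * |Real.exp (-(‖x‖ ^ 2) / lam ^ 2)|
      ≤ |h xD - (g : C(D, ℝ)) xD| * 1 := by
        apply mul_le_mul_of_nonneg_left hexple (abs_nonneg _)
    _ ≤ ε := by rw [mul_one]; exact le_of_lt hdiff
end

section
/- Let k(x, y) = exp(−(x−y)²/λ²) be the squared exponential kernel on ℝ and let x₁, …, x_n be pairwise distinct points. Then the Gram matrix K with K_{ij} = k(x_i, x_j) is strictly positive definite (invertible). -/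
open Finset Matrix

set_option maxHeartbeats 1000000

/-- Core positivity: for `c > 0`, distinct points `x`, and `w ≠ 0`, the quadratic
form of the kernel `exp (c * x i * x j)` is strictly positive. -/
theorem gaussian_aux_pos (n : ℕ) (c : ℝ) (hc : 0 < c) (x : Fin n → ℝ)
    (hx : Function.Injective x) (w : Fin n → ℝ) (hw : w ≠ 0) :
    0 < ∑ i, ∑ j, w i * w j * Real.exp (c * (x i * x j)) := by
  have hexp : ∀ t : ℝ, Real.exp t = ∑' m : ℕ, t ^ m / m.factorial := by
    intro t
    rw [Real.exp_eq_exp_ℝ, NormedSpace.exp_eq_tsum_div]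
  have hsummable : ∀ p : Fin n × Fin n,
      Summable fun m : ℕ => w p.1 * w p.2 * ((c * (x p.1 * x p.2)) ^ m / m.factorial) :=
    fun p => (Real.summable_pow_div_factorial _).mul_left _
  have h1 : (∑ i, ∑ j, w i * w j * Real.exp (c * (x i * x j))) =
      ∑' m : ℕ, ∑ p : Fin n × Fin n,
        w p.1 * w p.2 * ((c * (x p.1 * x p.2)) ^ m / m.factorial) := by
    rw [Summable.tsum_finsetSum (fun p _ => hsummable p), Fintype.sum_prod_type]
    refine Finset.sum_congr rfl fun i _ => Finset.sum_congr rfl fun j _ => ?_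
    rw [hexp (c * (x i * x j)), ← tsum_mul_left]
  have hterm : ∀ m : ℕ, (∑ p : Fin n × Fin n,
      w p.1 * w p.2 * ((c * (x p.1 * x p.2)) ^ m / m.factorial)) =
      c ^ m / m.factorial * (∑ j, w j * x j ^ m) ^ 2 := by
    intro m
    rw [sq, Finset.sum_mul_sum, Fintype.sum_prod_type, Finset.mul_sum]
    refine Finset.sum_congr rfl fun i _ => ?_
    rw [Finset.mul_sum]
    refine Finset.sum_congr rfl fun j _ => ?_
    rw [mul_pow, mul_pow]
    ring
  have hsum2 : Summable fun m : ℕ => ∑ p : Fin n × Fin n,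
      w p.1 * w p.2 * ((c * (x p.1 * x p.2)) ^ m / m.factorial) :=
    summable_sum fun p _ => hsummable p
  have hex : ∃ m : Fin n, (∑ j, w j * x j ^ (m : ℕ)) ≠ 0 := by
    by_contra h
    push_neg at h
    apply hw
    refine Matrix.eq_zero_of_mulVec_eq_zero
      (M := (Matrix.vandermonde x)ᵀ) ?_ (funext fun m => ?_)
    · rw [Matrix.det_transpose]
      exact Matrix.det_vandermonde_ne_zero_iff.mpr hx
    · have := h m
      simpa [Matrix.mulVec, dotProduct, Matrix.vandermonde, mul_comm] using this
  obtain ⟨m₀, hm₀⟩ := hex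
  rw [h1]
  refine Summable.tsum_pos hsum2 (fun m => ?_) (m₀ : ℕ) ?_
  · rw [hterm m]
    positivity
  · rw [hterm (m₀ : ℕ)]
    have h2 : 0 < (∑ j, w j * x j ^ (m₀ : ℕ)) ^ 2 := by positivity
    positivity

/-- Strict positive definiteness of the squared exponential kernel: the Gram matrix
`K_{ij} = exp(−(x_i − x_j)²/λ²)` at pairwise distinct points is positive definite
(hence invertible). -/
theorem squaredExponential_gram_posDef (n : ℕ) (lam2 : ℝ) (hlam : 0 < lam2)
    (x : Fin n → ℝ) (hx : Function.Injective x) :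
    (Matrix.of fun i j : Fin n => Real.exp (-(x i - x j) ^ 2 / lam2)).PosDef ∧
    IsUnit (Matrix.of fun i j : Fin n => Real.exp (-(x i - x j) ^ 2 / lam2)).det := by
  have hherm : (Matrix.of fun i j : Fin n =>
      Real.exp (-(x i - x j) ^ 2 / lam2)).IsHermitian := by
    ext i j
    simp only [Matrix.conjTranspose_apply, Matrix.of_apply, star_trivial]
    congr 1
    ring
  have hfac : ∀ a b : ℝ, Real.exp (-(a - b) ^ 2 / lam2) =
      Real.exp (-a ^ 2 / lam2) * Real.exp (-b ^ 2 / lam2)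
        * Real.exp (2 / lam2 * (a * b)) := by
    intro a b
    rw [← Real.exp_add, ← Real.exp_add]
    congr 1
    have h0 : lam2 ≠ 0 := ne_of_gt hlam
    field_simp
    ring
  have hposdef : (Matrix.of fun i j : Fin n =>
      Real.exp (-(x i - x j) ^ 2 / lam2)).PosDef := by
    refine Matrix.PosDef.of_dotProduct_mulVec_pos hherm fun v hv => ?_
    have hwne : (fun j => v j * Real.exp (-(x j) ^ 2 / lam2)) ≠ 0 := by
      intro h
      apply hv
      funext j
      have := congrFun h j
      simp only [Pi.zero_apply] at this
      exact (mul_eq_zero.mp this).resolve_right (Real.exp_ne_zero _)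
    have hkey := gaussian_aux_pos n (2 / lam2) (by positivity) x hx _ hwne
    have heq : star v ⬝ᵥ ((Matrix.of fun i j : Fin n =>
        Real.exp (-(x i - x j) ^ 2 / lam2)) *ᵥ v) =
        ∑ i, ∑ j, (v i * Real.exp (-(x i) ^ 2 / lam2)) * (v j * Real.exp (-(x j) ^ 2 / lam2))
          * Real.exp (2 / lam2 * (x i * x j)) := by
      simp only [dotProduct, Matrix.mulVec, star_trivial, Matrix.of_apply,
        Finset.mul_sum]
      refine Finset.sum_congr rfl fun i _ => Finset.sum_congr rfl fun j _ => ?_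
      rw [hfac (x i) (x j)]
      ring
    rw [heq]
    exact hkey
  exact ⟨hposdef, isUnit_iff_ne_zero.mpr (ne_of_gt hposdef.det_pos)⟩
end
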